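/- Let ϑ_P be a primitive random substitution with Perron–Frobenius eigenvalue λ and right Perron–Frobenius eigenvector R. Then for all n ∈ N, (λ^n − 1)^{-1}·H_n^T R ≤ (λ − 1)^{-1}·H_1^T R. If ϑ_P has unique realisation paths, then equality holds for all n ∈ N if and only if ϑ_P satisfies the disjoint set condition. -/

import Mathlib

open Filter MeasureTheory

namespace RandomSubstitutionTheory

variable {A : Type*} [Fintype A] [DecidableEq A]

/-- The set of realisations of `ϑ(u)` for a word `u`. -/
def reals (θ : A → Finset (List A)) : List A → Finset (List A)
  | [] => {[]}
  | a :: u => (θ a).biUnion fun v => (reals θ u).image fun w => v ++ w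

/-- The set of realisations of `ϑ^n(u)` for a word `u`. -/
def realsIter (θ : A → Finset (List A)) : ℕ → List A → Finset (List A)
  | 0, u => {u}
  | n + 1, u => (reals θ u).biUnion fun v => realsIter θ n v

/-- `wordProb θ P u w` is the probability `P[ϑ_P(u) = w]`, each letter of `u` being
substituted independently. -/
noncomputable def wordProb (θ : A → Finset (List A)) (P : A → List A → ℝ) :
    List A → List A → ℝ
  | [], w => if w = [] then 1 else 0
  | a :: u, w =>
      ∑ v ∈ θ a, P a v * (if v <+: w then wordProb θ P u (w.drop v.length) else 0)

/-- `iterProb θ P n u w` is the probability `P[ϑ_P^n(u) = w]` of the induced Markov chain. -/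
noncomputable def iterProb (θ : A → Finset (List A)) (P : A → List A → ℝ) :
    ℕ → List A → List A → ℝ
  | 0, u, w => if u = w then 1 else 0
  | n + 1, u, w => ∑ v ∈ reals θ u, wordProb θ P u v * iterProb θ P n v w

/-- The substitution matrix `M_{ij} = E[|ϑ_P(a_j)|_{a_i}]`. -/
noncomputable def substM (θ : A → Finset (List A)) (P : A → List A → ℝ) :
    Matrix A A ℝ :=
  Matrix.of fun i j => ∑ w ∈ θ j, P j w * (w.count i : ℝ)

/-- The defining data of a random substitution: nonempty finite sets of nonempty words
and strictly positive probability vectors. -/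
def IsRandomSubstitution (θ : A → Finset (List A)) (P : A → List A → ℝ) : Prop :=
  (∀ a, (θ a).Nonempty) ∧ (∀ a, ∀ w ∈ θ a, w ≠ []) ∧
    (∀ a, ∀ w ∈ θ a, 0 < P a w) ∧ (∀ a w, w ∉ θ a → P a w = 0) ∧
    ∀ a, ∑ w ∈ θ a, P a w = 1

/-- Primitivity of the substitution matrix: some power has strictly positive entries. -/
def IsPrimitive (θ : A → Finset (List A)) (P : A → List A → ℝ) : Prop :=
  ∃ k : ℕ, ∀ i j : A, 0 < (substM θ P ^ k) i j

/-- The Perron–Frobenius eigenvalue is `> 1` (witnessed by a positive right eigenvector). -/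
def IsExpanding (θ : A → Finset (List A)) (P : A → List A → ℝ) : Prop :=
  ∃ lam : ℝ, 1 < lam ∧ ∃ R : A → ℝ, (∀ a, 0 < R a) ∧ (substM θ P).mulVec R = lam • R

/-- A word is legal if it occurs as a subword of some level-`k` inflation word. -/
def Legal (θ : A → Finset (List A)) (u : List A) : Prop :=
  ∃ (a : A) (k : ℕ) (w : List A), w ∈ realsIter θ k [a] ∧ u <:+: w

/-- All words of length `n` over the alphabet. -/
def allWords (A : Type*) [Fintype A] [DecidableEq A] (n : ℕ) : Finset (List A) :=
  (Finset.univ : Finset (Fin n → A)).image List.ofFn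

/-- All legal words of length `n`. -/
noncomputable def legalWords (θ : A → Finset (List A)) (n : ℕ) : Finset (List A) :=
  letI := Classical.decPred (Legal θ)
  (allWords A n).filter (Legal θ)

/-- The left shift on bi-infinite sequences. -/
def shift : (ℤ → A) → ℤ → A := fun x i => x (i + 1)

/-- The finite word of length `n` read off a bi-infinite sequence starting at position `m`. -/
def window (x : ℤ → A) (m : ℤ) (n : ℕ) : List A :=
  (List.range n).map fun t => x (m + (t : ℤ))

/-- The random substitution subshift `X_ϑ`. -/
def Xtheta (θ : A → Finset (List A)) : Set (ℤ → A) :=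
  {x | ∀ (m : ℤ) (n : ℕ), Legal θ (window x m n)}

/-- The cylinder set of the word `v` at position `m`. -/
def cylinder (v : List A) (m : ℤ) : Set (ℤ → A) :=
  {x | window x m v.length = v}

/-- The number `|w|_v` of (possibly overlapping) occurrences of `v` in `w`. -/
def occCount (v w : List A) : ℕ :=
  ((List.range w.length).filter fun i => decide (v <+: w.drop i)).length

/-- Expected length `E[|ϑ_P^k(a)|]`. -/
noncomputable def expLen (θ : A → Finset (List A)) (P : A → List A → ℝ)
    (k : ℕ) (a : A) : ℝ :=
  ∑ w ∈ realsIter θ k [a], iterProb θ P k [a] w * (w.length : ℝ)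

/-- Expected number of occurrences `E[|ϑ_P^k(a)|_v]`. -/
noncomputable def expCount (θ : A → Finset (List A)) (P : A → List A → ℝ)
    (k : ℕ) (a : A) (v : List A) : ℝ :=
  ∑ w ∈ realsIter θ k [a], iterProb θ P k [a] w * (occCount v w : ℝ)

/-- `μ` is the frequency measure of `(ϑ, P)`: a shift-invariant Borel probability measure
supported on `X_ϑ` whose cylinder values are the expected word frequencies. -/
def IsFrequencyMeasure [MeasurableSpace A] (θ : A → Finset (List A))
    (P : A → List A → ℝ) (μ : Measure (ℤ → A)) : Prop :=
  IsProbabilityMeasure μ ∧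
    (∀ s : Set (ℤ → A), MeasurableSet s → μ (shift ⁻¹' s) = μ s) ∧
    μ (Xtheta θ) = 1 ∧
    ∀ v : List A, Legal θ v → ∀ (m : ℤ) (a : A),
      Tendsto (fun k : ℕ => expCount θ P k a v / expLen θ P k a) atTop
        (nhds ((μ (cylinder v m)).toReal))

/-- The `n`-th entropy sum `∑_{u ∈ L_ϑ^n} -μ[u] log μ[u]`. -/
noncomputable def entropySeq [MeasurableSpace A] (θ : A → Finset (List A))
    (μ : Measure (ℤ → A)) (n : ℕ) : ℝ :=
  ∑ u ∈ legalWords θ n, Real.negMulLog ((μ (cylinder u 0)).toReal)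

/-- The measure-theoretic (Kolmogorov–Sinai) entropy of the shift with respect to `μ`,
computed along cylinder partitions. -/
noncomputable def measEntropy [MeasurableSpace A] (θ : A → Finset (List A))
    (μ : Measure (ℤ → A)) : ℝ :=
  limsup (fun n : ℕ => entropySeq θ μ n / (n : ℝ)) atTop

/-- The topological entropy of the subshift `X_ϑ`. -/
noncomputable def topEntropy (θ : A → Finset (List A)) : ℝ :=
  limsup (fun n : ℕ => Real.log ((legalWords θ n).card) / (n : ℝ)) atTop

/-- The entropy vector `H_{k,a} = H(ϑ_P^k(a))`. -/
noncomputable def Hvec (θ : A → Finset (List A)) (P : A → List A → ℝ)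
    (k : ℕ) (a : A) : ℝ :=
  ∑ w ∈ realsIter θ k [a], Real.negMulLog (iterProb θ P k [a] w)

/-- The inner product `H_k^T R`. -/
noncomputable def HdotR (θ : A → Finset (List A)) (P : A → List A → ℝ)
    (R : A → ℝ) (k : ℕ) : ℝ :=
  ∑ a, Hvec θ P k a * R a

/-- Binary entropy `H(p) = -p log p - (1-p) log (1-p)`. -/
noncomputable def binEnt (p : ℝ) : ℝ := Real.negMulLog p + Real.negMulLog (1 - p)

/-- Unique realisation paths: concatenation of level-`k` inflation words of the letters of a
legal word is injective. -/
def UniqueRealisationPaths (θ : A → Finset (List A)) : Prop :=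
  ∀ v : List A, Legal θ v → ∀ k : ℕ, ∀ f g : Fin v.length → List A,
    (∀ i, f i ∈ realsIter θ k [v.get i]) → (∀ i, g i ∈ realsIter θ k [v.get i]) →
      (List.ofFn f).flatten = (List.ofFn g).flatten → f = g

/-- The disjoint set condition. -/
def DisjointSetCondition (θ : A → Finset (List A)) : Prop :=
  ∀ (a : A) (k : ℕ), ∀ u ∈ θ a, ∀ v ∈ θ a, u ≠ v →
    ∀ w, w ∈ realsIter θ k u → w ∉ realsIter θ k v

/-- The identical set condition. -/
def IdenticalSetCondition (θ : A → Finset (List A)) : Prop :=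
  ∀ (a : A) (k : ℕ), ∀ u ∈ θ a, ∀ v ∈ θ a, realsIter θ k u = realsIter θ k v

/-- Identical production probabilities. -/
def IdenticalProductionProbabilities (θ : A → Finset (List A))
    (P : A → List A → ℝ) : Prop :=
  ∀ a : A, ∀ u ∈ θ a, ∀ v ∈ θ a, ∀ (k : ℕ) (w : List A),
    iterProb θ P k u w = iterProb θ P k v w

/-- The disjoint set condition for the `k`-th power `ϑ^k`. -/
def DisjointSetConditionPow (θ : A → Finset (List A)) (k : ℕ) : Prop :=
  ∀ (a : A) (j : ℕ), ∀ u ∈ realsIter θ k [a], ∀ v ∈ realsIter θ k [a], u ≠ v →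
    ∀ w, w ∈ realsIter θ (k * j) u → w ∉ realsIter θ (k * j) v

/-- The identical set condition for the `k`-th power `ϑ^k`. -/
def IdenticalSetConditionPow (θ : A → Finset (List A)) (k : ℕ) : Prop :=
  ∀ (a : A) (j : ℕ), ∀ u ∈ realsIter θ k [a], ∀ v ∈ realsIter θ k [a],
    realsIter θ (k * j) u = realsIter θ (k * j) v

/-- Identical production probabilities for the `k`-th power `ϑ^k`. -/
def IdenticalProductionProbabilitiesPow (θ : A → Finset (List A))
    (P : A → List A → ℝ) (k : ℕ) : Prop :=
  ∀ a : A, ∀ u ∈ realsIter θ k [a], ∀ v ∈ realsIter θ k [a], ∀ (j : ℕ) (w : List A),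
    iterProb θ P (k * j) u w = iterProb θ P (k * j) v w

/-- Compatibility: all realisations of a letter have the same abelianisation. -/
def Compatible (θ : A → Finset (List A)) : Prop :=
  ∀ a : A, ∀ u ∈ θ a, ∀ v ∈ θ a, ∀ b : A, u.count b = v.count b

/-- Constant length `ℓ ≥ 2`. -/
def ConstantLength (θ : A → Finset (List A)) (ℓ : ℕ) : Prop :=
  2 ≤ ℓ ∧ ∀ a : A, ∀ w ∈ θ a, w.length = ℓ

/-- The set `ϑ(y)` of bi-infinite sequences obtained by substituting each letter of `y`,
with the image of `y 0` beginning at position `0`. -/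
def substSeq (θ : A → Finset (List A)) (y : ℤ → A) : Set (ℤ → A) :=
  {x | ∃ v : ℤ → List A, (∀ j, v j ∈ θ (y j)) ∧
    ∃ p : ℤ → ℤ, p 0 = 0 ∧ (∀ j, p (j + 1) = p j + (v j).length) ∧
      ∀ (j : ℤ) (t : ℕ) (ht : t < (v j).length), x (p j + (t : ℤ)) = (v j).get ⟨t, ht⟩}

/-- `ϑ(X)` for a set of bi-infinite sequences. -/
def substImage (θ : A → Finset (List A)) (X : Set (ℤ → A)) : Set (ℤ → A) :=
  ⋃ y ∈ X, substSeq θ y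

/-- The set `ϑ^m(y)` of bi-infinite sequences. -/
def substSeqPow (θ : A → Finset (List A)) : ℕ → (ℤ → A) → Set (ℤ → A)
  | 0, y => {y}
  | m + 1, y => ⋃ z ∈ substSeq θ y, substSeqPow θ m z

/-- The maximal length of an inflation word of the letter `a` (equals the common length
when lengths are well-defined). -/
def maxLen (θ : A → Finset (List A)) (a : A) : ℕ := (θ a).sup List.length

/-- Recognisability: every `x ∈ X_ϑ` has a unique inflation-word decomposition. -/
def Recognisable (θ : A → Finset (List A)) : Prop :=
  ∀ x ∈ Xtheta θ, ∃! p : (ℤ → A) × ℕ,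
    p.1 ∈ Xtheta θ ∧ p.2 < maxLen θ (p.1 0) ∧
      (fun i => x (i - (p.2 : ℤ))) ∈ substSeq θ p.1

/-- Recognisability of the `m`-th power of a constant length-`ℓ` substitution. -/
def RecognisablePow (θ : A → Finset (List A)) (m ℓ : ℕ) : Prop :=
  ∀ x ∈ Xtheta θ, ∃! p : (ℤ → A) × ℕ,
    p.1 ∈ Xtheta θ ∧ p.2 < ℓ ^ m ∧
      (fun i => x (i - (p.2 : ℤ))) ∈ substSeqPow θ m p.1

/-- The set `ϑ^m([a])` of exact images of sequences in the cylinder `[a] ⊆ X_ϑ`. -/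
def inflCylPow (θ : A → Finset (List A)) (m : ℕ) (a : A) : Set (ℤ → A) :=
  ⋃ y ∈ {w ∈ Xtheta θ | w 0 = a}, substSeqPow θ m y

/-- `r` is a radius of local recognisability for `ϑ^m`. -/
def RecogPropPow (θ : A → Finset (List A)) (m r : ℕ) : Prop :=
  ∀ (a : A) (x : ℤ → A), x ∈ inflCylPow θ m a → ∀ y ∈ Xtheta θ,
    (∀ t : ℤ, -(r : ℤ) ≤ t → t ≤ (r : ℤ) → x t = y t) → y ∈ inflCylPow θ m a

/-- The recognisability radius `κ(ϑ^m)`. -/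
noncomputable def recogRadiusPow (θ : A → Finset (List A)) (m : ℕ) : ℕ :=
  sInf {r | RecogPropPow θ m r}

/-- The recognisability radius `κ(ϑ)`. -/
noncomputable def recogRadius (θ : A → Finset (List A)) : ℕ := recogRadiusPow θ 1

/-- The random word `ϑ_P^n(a)` is (a.s.) completely determined by `ϑ_P^{n+k}(a)`
in the Markov chain. -/
def DeterminedBy (θ : A → Finset (List A)) (P : A → List A → ℝ)
    (a : A) (n k : ℕ) : Prop :=
  ∀ v₁ v₂ w : List A, v₁ ∈ realsIter θ n [a] → v₂ ∈ realsIter θ n [a] →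
    0 < iterProb θ P n [a] v₁ * iterProb θ P k v₁ w →
      0 < iterProb θ P n [a] v₂ * iterProb θ P k v₂ w → v₁ = v₂

/-- The random words `ϑ_P^n(a)` and `ϑ_P^{n+k}(a)` are independent in the Markov chain. -/
def IndepSteps (θ : A → Finset (List A)) (P : A → List A → ℝ)
    (a : A) (n k : ℕ) : Prop :=
  ∀ v w : List A,
    iterProb θ P n [a] v * iterProb θ P k v w =
      iterProb θ P n [a] v * iterProb θ P (n + k) [a] w

/-- The substitution matrix of a marginal (deterministic) substitution. -/
def marginalM (ρ : A → List A) : Matrix A A ℝ :=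
  Matrix.of fun i j => ((ρ j).count i : ℝ)

/-- Geometric compatibility: a single positive left eigenvector with eigenvalue `λ > 1`
for all marginals. -/
def GeometricallyCompatible (θ : A → Finset (List A)) : Prop :=
  ∃ lam : ℝ, 1 < lam ∧ ∃ L : A → ℝ, (∀ a, 0 < L a) ∧
    ∀ ρ : A → List A, (∀ a, ρ a ∈ θ a) → Matrix.vecMul L (marginalM ρ) = lam • L



section Aux

variable {θ : A → Finset (List A)} {P : A → List A → ℝ}

set_option linter.unusedSectionVars false

lemma mem_reals_cons {a : A} {u w : List A} :
    w ∈ reals θ (a :: u) ↔ ∃ v ∈ θ a, ∃ w2 ∈ reals θ u, w = v ++ w2 := by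
  simp only [reals, Finset.mem_biUnion, Finset.mem_image]
  constructor
  · rintro ⟨v, hv, w2, hw2, rfl⟩; exact ⟨v, hv, w2, hw2, rfl⟩
  · rintro ⟨v, hv, w2, hw2, rfl⟩; exact ⟨v, hv, w2, hw2, rfl⟩

lemma append_prefix_iff {v z w : List A} :
    v ++ z <+: w ↔ v <+: w ∧ z <+: w.drop v.length := by
  constructor
  · rintro ⟨r, rfl⟩
    refine ⟨⟨z ++ r, by simp⟩, ?_⟩
    rw [List.append_assoc, List.drop_left]
    exact ⟨r, rfl⟩
  · rintro ⟨⟨r, rfl⟩, hz⟩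
    rw [List.drop_left] at hz
    obtain ⟨s, rfl⟩ := hz
    exact ⟨s, by simp⟩

variable (hPpos : ∀ a, ∀ w ∈ θ a, 0 < P a w) (hP0 : ∀ a w, w ∉ θ a → P a w = 0)
  (hPsum : ∀ a, ∑ w ∈ θ a, P a w = 1)

include hPpos hP0 in
lemma P_nonneg (a : A) (w : List A) : 0 ≤ P a w := by
  by_cases h : w ∈ θ a
  · exact (hPpos a w h).le
  · rw [hP0 a w h]

include hPpos hP0 in
lemma wordProb_nonneg (u w : List A) : 0 ≤ wordProb θ P u w := by
  induction u generalizing w with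
  | nil => simp only [wordProb]; split <;> norm_num
  | cons a u ih =>
      apply Finset.sum_nonneg
      intro v hv
      apply mul_nonneg (P_nonneg hPpos hP0 a v)
      split
      · exact ih _
      · rfl

lemma wordProb_eq_zero (u w : List A) (hw : w ∉ reals θ u) : wordProb θ P u w = 0 := by
  induction u generalizing w with
  | nil =>
      simp only [reals, Finset.mem_singleton] at hw
      simp only [wordProb, if_neg hw]
  | cons a u ih =>
      apply Finset.sum_eq_zero
      intro v hv
      rcases Classical.em (v <+: w) with hp | hp
      · rw [if_pos hp]
        have : w.drop v.length ∉ reals θ u := by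
          intro hmem
          exact hw (mem_reals_cons.2 ⟨v, hv, _, hmem, by
            obtain ⟨r, rfl⟩ := hp; rw [List.drop_left]⟩)
        rw [ih _ this, mul_zero]
      · rw [if_neg hp, mul_zero]

lemma mem_reals_append {u u' v w : List A} (hv : v ∈ reals θ u) (hw : w ∈ reals θ u') :
    v ++ w ∈ reals θ (u ++ u') := by
  induction u generalizing v with
  | nil =>
      simp only [reals, Finset.mem_singleton] at hv
      subst hv; simpa using hw
  | cons a u ih =>
      obtain ⟨v1, hv1, v2, hv2, rfl⟩ := mem_reals_cons.1 hv
      rw [List.cons_append]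
      exact mem_reals_cons.2 ⟨v1, hv1, v2 ++ w, ih hv2, by rw [List.append_assoc]⟩

include hPsum hP0 in
lemma sum_wordProb (u : List A) : ∑ w ∈ reals θ u, wordProb θ P u w = 1 := by
  induction u with
  | nil => simp [reals, wordProb]
  | cons a u ih =>
      simp only [wordProb]
      rw [Finset.sum_comm]
      have : ∀ v ∈ θ a,
          ∑ w ∈ reals θ (a :: u), P a v * (if v <+: w then wordProb θ P u (w.drop v.length) else 0)
            = P a v := by
        intro v hv
        have himg : ∑ w ∈ (reals θ u).image (fun w2 => v ++ w2),
            P a v * (if v <+: w then wordProb θ P u (w.drop v.length) else 0)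
            = ∑ w2 ∈ reals θ u, P a v * wordProb θ P u w2 := by
          rw [Finset.sum_image (by intro x _ y _ h; exact List.append_cancel_left h)]
          apply Finset.sum_congr rfl
          intro w2 _
          rw [if_pos (List.prefix_append v w2), List.drop_left]
        rw [← Finset.sum_subset (fun w hw => ?_) (fun w hw hnotin => ?_), himg,
          ← Finset.mul_sum, ih, mul_one]
        · rw [Finset.mem_image] at hw
          obtain ⟨w2, hw2, rfl⟩ := hw
          exact mem_reals_cons.2 ⟨v, hv, w2, hw2, rfl⟩
        · rcases Classical.em (v <+: w) with hp | hp
          · rw [if_pos hp]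
            have : w.drop v.length ∉ reals θ u := by
              intro hmem
              exact hnotin (Finset.mem_image.2 ⟨_, hmem, by
                obtain ⟨r, rfl⟩ := hp; rw [List.drop_left]⟩)
            rw [wordProb_eq_zero _ _ this, mul_zero]
          · rw [if_neg hp, mul_zero]
      rw [Finset.sum_congr rfl this, hPsum]

include hPpos hP0 in
lemma wordProb_pos {u w : List A} (hw : w ∈ reals θ u) : 0 < wordProb θ P u w := by
  induction u generalizing w with
  | nil =>
      simp only [reals, Finset.mem_singleton] at hw
      subst hw; simp [wordProb]
  | cons a u ih =>
      obtain ⟨v, hv, w2, hw2, rfl⟩ := mem_reals_cons.1 hw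
      refine Finset.sum_pos' (fun x hx => mul_nonneg (P_nonneg hPpos hP0 a x) ?_) ⟨v, hv, ?_⟩
      · split
        · exact wordProb_nonneg hPpos hP0 _ _
        · rfl
      · rw [if_pos (List.prefix_append v w2), List.drop_left]
        exact mul_pos (hPpos a v hv) (ih hw2)


lemma realsIter_succ (n : ℕ) (u : List A) :
    realsIter θ (n + 1) u = (reals θ u).biUnion fun v => realsIter θ n v := rfl

lemma wordProb_cons (a : A) (u w : List A) :
    wordProb θ P (a :: u) w
      = ∑ v ∈ θ a, P a v * (if v <+: w then wordProb θ P u (w.drop v.length) else 0) := rfl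

lemma iterProb_zero (u w : List A) : iterProb θ P 0 u w = if u = w then 1 else 0 := rfl

lemma iterProb_succ (n : ℕ) (u w : List A) :
    iterProb θ P (n + 1) u w
      = ∑ v ∈ reals θ u, wordProb θ P u v * iterProb θ P n v w := rfl

include hPpos hP0 in
lemma iterProb_nonneg (n : ℕ) (u w : List A) : 0 ≤ iterProb θ P n u w := by
  induction n generalizing u w with
  | zero => rw [iterProb_zero]; split <;> norm_num
  | succ n ih =>
      rw [iterProb_succ]
      exact Finset.sum_nonneg fun v _ => mul_nonneg (wordProb_nonneg hPpos hP0 _ _) (ih _ _)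

lemma iterProb_eq_zero (n : ℕ) (u w : List A) (hw : w ∉ realsIter θ n u) :
    iterProb θ P n u w = 0 := by
  induction n generalizing u w with
  | zero =>
      simp only [realsIter, Finset.mem_singleton] at hw
      rw [iterProb_zero]
      exact if_neg (fun h => hw h.symm)
  | succ n ih =>
      rw [iterProb_succ]
      apply Finset.sum_eq_zero
      intro v hv
      have : w ∉ realsIter θ n v := fun hmem =>
        hw (by rw [realsIter_succ]; exact Finset.mem_biUnion.2 ⟨v, hv, hmem⟩)
      rw [ih _ _ this, mul_zero]

include hPpos hP0 hPsum in
lemma sum_iterProb (n : ℕ) (u : List A) :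
    ∑ w ∈ realsIter θ n u, iterProb θ P n u w = 1 := by
  induction n generalizing u with
  | zero => simp [realsIter, iterProb_zero]
  | succ n ih =>
      simp only [iterProb_succ]
      rw [Finset.sum_comm]
      have : ∀ v ∈ reals θ u,
          ∑ w ∈ realsIter θ (n+1) u, wordProb θ P u v * iterProb θ P n v w
            = wordProb θ P u v := by
        intro v hv
        have hsub : realsIter θ n v ⊆ realsIter θ (n+1) u := by
          rw [realsIter_succ]; exact Finset.subset_biUnion_of_mem _ hv
        have hext := Finset.sum_subset (f := fun w => wordProb θ P u v * iterProb θ P n v w)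
          hsub (fun w _ hw => by simp only [iterProb_eq_zero n v w hw, mul_zero])
        rw [← hext, ← Finset.mul_sum, ih, mul_one]
      rw [Finset.sum_congr rfl this, sum_wordProb hP0 hPsum]

include hPpos hP0 in
lemma iterProb_pos {n : ℕ} {u w : List A} (hw : w ∈ realsIter θ n u) :
    0 < iterProb θ P n u w := by
  induction n generalizing u w with
  | zero =>
      simp only [realsIter, Finset.mem_singleton] at hw
      subst hw; simp [iterProb_zero]
  | succ n ih =>
      rw [realsIter_succ] at hw
      obtain ⟨v, hv, hw⟩ := Finset.mem_biUnion.1 hw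
      rw [iterProb_succ]
      refine Finset.sum_pos'
        (fun x _ => mul_nonneg (wordProb_nonneg hPpos hP0 _ _) (iterProb_nonneg hPpos hP0 _ _ _))
        ⟨v, hv, mul_pos (wordProb_pos hPpos hP0 hv) (ih hw)⟩

include hPpos hP0 in
lemma iterProb_support {n : ℕ} {u w : List A} (h : iterProb θ P n u w ≠ 0) :
    w ∈ realsIter θ n u :=
  by_contra fun hc => h (iterProb_eq_zero n u w hc)

lemma mem_realsIter_append {n : ℕ} {u u' v w : List A}
    (hv : v ∈ realsIter θ n u) (hw : w ∈ realsIter θ n u') :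
    v ++ w ∈ realsIter θ n (u ++ u') := by
  induction n generalizing u u' v w with
  | zero =>
      simp only [realsIter, Finset.mem_singleton] at hv hw ⊢
      rw [hv, hw]
  | succ n ih =>
      rw [realsIter_succ] at hv hw ⊢
      obtain ⟨z, hz, hv⟩ := Finset.mem_biUnion.1 hv
      obtain ⟨z', hz', hw⟩ := Finset.mem_biUnion.1 hw
      exact Finset.mem_biUnion.2 ⟨z ++ z', mem_reals_append hz hz', ih hv hw⟩

lemma realsIter_nil (n : ℕ) : realsIter θ n ([] : List A) = {[]} := by
  induction n with
  | zero => rfl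
  | succ n ih => simp [realsIter_succ, reals, ih]

lemma wordProb_append (u u' w : List A) :
    wordProb θ P (u ++ u') w = ∑ z ∈ reals θ u,
      wordProb θ P u z * if z <+: w then wordProb θ P u' (w.drop z.length) else 0 := by
  induction u generalizing w with
  | nil => simp [reals, wordProb]
  | cons a u ih =>
      rw [List.cons_append, wordProb_cons]
      have lhs : ∀ v ∈ θ a,
          P a v * (if v <+: w then wordProb θ P (u ++ u') (w.drop v.length) else 0)
          = ∑ z ∈ reals θ u, P a v * (wordProb θ P u z *
              if v ++ z <+: w then wordProb θ P u' (w.drop (v ++ z).length) else 0) := by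
        intro v hv
        rcases Classical.em (v <+: w) with hp | hp
        · rw [if_pos hp, ih, Finset.mul_sum]
          apply Finset.sum_congr rfl
          intro z hz
          congr 2
          by_cases hq : z <+: List.drop v.length w
          · rw [if_pos hq, if_pos (append_prefix_iff.2 ⟨hp, hq⟩), List.length_append,
              List.drop_drop]
          · rw [if_neg hq, if_neg (fun hc => hq (append_prefix_iff.1 hc).2)]
        · rw [if_neg hp, mul_zero]
          symm; apply Finset.sum_eq_zero
          intro z hz
          rw [if_neg (fun hc => hp (append_prefix_iff.1 hc).1), mul_zero, mul_zero]
      rw [Finset.sum_congr rfl lhs]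
      symm
      have rhs : ∀ z' ∈ reals θ (a :: u),
          wordProb θ P (a :: u) z' * (if z' <+: w then wordProb θ P u' (w.drop z'.length) else 0)
          = ∑ v ∈ θ a, (P a v * if v <+: z' then wordProb θ P u (z'.drop v.length) else 0) *
              (if z' <+: w then wordProb θ P u' (w.drop z'.length) else 0) := by
        intro z' _
        rw [wordProb_cons, Finset.sum_mul]
      rw [Finset.sum_congr rfl rhs, Finset.sum_comm]
      apply Finset.sum_congr rfl
      intro v hv
      have himg : ∑ z' ∈ (reals θ u).image (fun z => v ++ z),
          (P a v * if v <+: z' then wordProb θ P u (z'.drop v.length) else 0) *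
            (if z' <+: w then wordProb θ P u' (w.drop z'.length) else 0)
          = ∑ z ∈ reals θ u, P a v * (wordProb θ P u z *
              if v ++ z <+: w then wordProb θ P u' (w.drop (v ++ z).length) else 0) := by
        rw [Finset.sum_image (by intro x _ y _ h; exact List.append_cancel_left h)]
        apply Finset.sum_congr rfl
        intro z hz
        rw [if_pos (List.prefix_append v z), List.drop_left, mul_assoc, mul_ite, mul_zero]
      rw [← himg]
      symm
      apply Finset.sum_subset (fun z' hz' => ?_) (fun z' hz' hnotin => ?_)
      · rw [Finset.mem_image] at hz'
        obtain ⟨z, hz, rfl⟩ := hz'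
        exact mem_reals_cons.2 ⟨v, hv, z, hz, rfl⟩
      · rcases Classical.em (v <+: z') with hp | hp
        · rw [if_pos hp]
          have : z'.drop v.length ∉ reals θ u := by
            intro hmem
            exact hnotin (Finset.mem_image.2 ⟨_, hmem, by
              obtain ⟨r, rfl⟩ := hp; rw [List.drop_left]⟩)
          rw [wordProb_eq_zero _ _ this, mul_zero, zero_mul]
        · rw [if_neg hp, mul_zero, zero_mul]

lemma ite_sum_zero {β : Type*} {c : Prop} [Decidable c] {s : Finset β} (g : β → ℝ) :
    (if c then ∑ x ∈ s, g x else 0) = ∑ x ∈ s, if c then g x else 0 := by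
  split
  · rfl
  · exact Finset.sum_const_zero.symm

include hPpos hP0 hPsum in
lemma iterProb_append (n : ℕ) (u u' w : List A) :
    iterProb θ P n (u ++ u') w = ∑ z ∈ realsIter θ n u,
      iterProb θ P n u z * if z <+: w then iterProb θ P n u' (w.drop z.length) else 0 := by
  induction n generalizing u u' w with
  | zero =>
      show _ = ∑ z ∈ {u}, _
      rw [Finset.sum_singleton, iterProb_zero, iterProb_zero, if_pos rfl, one_mul]
      by_cases h : u ++ u' = w
      · subst h
        rw [if_pos rfl, if_pos (List.prefix_append u u'), List.drop_left, iterProb_zero,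
          if_pos rfl]
      · rw [if_neg h]
        by_cases hp : u <+: w
        · rw [if_pos hp, iterProb_zero]
          have : ¬ (u' = w.drop u.length) := by
            intro hd
            apply h
            obtain ⟨r, rfl⟩ := hp
            rw [List.drop_left] at hd
            rw [hd]
          rw [if_neg this]
        · rw [if_neg hp]
  | succ n ih =>
      have key : ∀ u₀ w₀ : List A, iterProb θ P (n+1) u₀ w₀
          = ∑ v ∈ reals θ u₀, wordProb θ P u₀ v * iterProb θ P n v w₀ := fun _ _ => rfl
      -- LHS to canonical form
      have hLHS : iterProb θ P (n+1) (u ++ u') w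
          = ∑ z1 ∈ reals θ u, ∑ z2 ∈ reals θ u', ∑ y ∈ realsIter θ n z1,
              wordProb θ P u z1 * (wordProb θ P u' z2 *
                (iterProb θ P n z1 y *
                  if y <+: w then iterProb θ P n z2 (w.drop y.length) else 0)) := by
        rw [key]
        have step1 : ∀ z ∈ reals θ (u ++ u'),
            wordProb θ P (u ++ u') z * iterProb θ P n z w
            = ∑ z1 ∈ reals θ u, (wordProb θ P u z1 *
                if z1 <+: z then wordProb θ P u' (z.drop z1.length) else 0)
                  * iterProb θ P n z w := by
          intro z _
          rw [wordProb_append, Finset.sum_mul]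
        rw [Finset.sum_congr rfl step1, Finset.sum_comm]
        apply Finset.sum_congr rfl
        intro z1 hz1
        have himg : ∑ z ∈ (reals θ u').image (fun z2 => z1 ++ z2),
            (wordProb θ P u z1 *
                if z1 <+: z then wordProb θ P u' (z.drop z1.length) else 0)
                  * iterProb θ P n z w
            = ∑ z2 ∈ reals θ u', wordProb θ P u z1 *
                (wordProb θ P u' z2 * iterProb θ P n (z1 ++ z2) w) := by
          rw [Finset.sum_image (by intro x _ y _ h; exact List.append_cancel_left h)]
          apply Finset.sum_congr rfl
          intro z2 _
          rw [if_pos (List.prefix_append z1 z2), List.drop_left, mul_assoc]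
        have hext : ∑ z ∈ reals θ (u ++ u'),
            (wordProb θ P u z1 *
                if z1 <+: z then wordProb θ P u' (z.drop z1.length) else 0)
                  * iterProb θ P n z w
            = ∑ z ∈ (reals θ u').image (fun z2 => z1 ++ z2),
            (wordProb θ P u z1 *
                if z1 <+: z then wordProb θ P u' (z.drop z1.length) else 0)
                  * iterProb θ P n z w := by
          symm
          apply Finset.sum_subset (fun z hz => ?_) (fun z hz hnotin => ?_)
          · rw [Finset.mem_image] at hz
            obtain ⟨z2, hz2, rfl⟩ := hz
            exact mem_reals_append hz1 hz2
          · rcases Classical.em (z1 <+: z) with hp | hp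
            · rw [if_pos hp]
              have : z.drop z1.length ∉ reals θ u' := by
                intro hmem
                exact hnotin (Finset.mem_image.2 ⟨_, hmem, by
                  obtain ⟨r, rfl⟩ := hp; rw [List.drop_left]⟩)
              rw [wordProb_eq_zero _ _ this, mul_zero, zero_mul]
            · rw [if_neg hp, mul_zero, zero_mul]
        rw [hext, himg]
        apply Finset.sum_congr rfl
        intro z2 _
        rw [ih z1 z2 w, Finset.mul_sum, Finset.mul_sum]
      -- RHS to canonical form
      rw [hLHS]
      have hRHS : ∀ y ∈ realsIter θ (n+1) u,
          iterProb θ P (n+1) u y *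
            (if y <+: w then iterProb θ P (n+1) u' (w.drop y.length) else 0)
          = ∑ z1 ∈ reals θ u, ∑ z2 ∈ reals θ u',
              wordProb θ P u z1 * (wordProb θ P u' z2 *
                (iterProb θ P n z1 y *
                  if y <+: w then iterProb θ P n z2 (w.drop y.length) else 0)) := by
        intro y _
        rw [key u y, key u' (w.drop y.length), ite_sum_zero, Finset.sum_mul]
        apply Finset.sum_congr rfl
        intro z1 _
        rw [Finset.mul_sum]
        apply Finset.sum_congr rfl
        intro z2 _
        split_ifs <;> ring
      calc ∑ z1 ∈ reals θ u, ∑ z2 ∈ reals θ u', ∑ y ∈ realsIter θ n z1,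
              wordProb θ P u z1 * (wordProb θ P u' z2 *
                (iterProb θ P n z1 y *
                  if y <+: w then iterProb θ P n z2 (w.drop y.length) else 0))
          = ∑ z1 ∈ reals θ u, ∑ z2 ∈ reals θ u', ∑ y ∈ realsIter θ (n+1) u,
              wordProb θ P u z1 * (wordProb θ P u' z2 *
                (iterProb θ P n z1 y *
                  if y <+: w then iterProb θ P n z2 (w.drop y.length) else 0)) := by
            apply Finset.sum_congr rfl
            intro z1 hz1
            apply Finset.sum_congr rfl
            intro z2 _
            have hsub : realsIter θ n z1 ⊆ realsIter θ (n+1) u := by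
              rw [realsIter_succ]; exact Finset.subset_biUnion_of_mem _ hz1
            apply Finset.sum_subset hsub
            intro y _ hy
            simp only [iterProb_eq_zero n z1 y hy, mul_zero, zero_mul, mul_ite, ite_self]
        _ = ∑ z1 ∈ reals θ u, ∑ y ∈ realsIter θ (n+1) u, ∑ z2 ∈ reals θ u',
              wordProb θ P u z1 * (wordProb θ P u' z2 *
                (iterProb θ P n z1 y *
                  if y <+: w then iterProb θ P n z2 (w.drop y.length) else 0)) :=
            Finset.sum_congr rfl fun z1 _ => Finset.sum_comm
        _ = ∑ y ∈ realsIter θ (n+1) u, ∑ z1 ∈ reals θ u, ∑ z2 ∈ reals θ u',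
              wordProb θ P u z1 * (wordProb θ P u' z2 *
                (iterProb θ P n z1 y *
                  if y <+: w then iterProb θ P n z2 (w.drop y.length) else 0)) :=
            Finset.sum_comm
        _ = ∑ y ∈ realsIter θ (n+1) u, iterProb θ P (n+1) u y *
              if y <+: w then iterProb θ P (n+1) u' (w.drop y.length) else 0 :=
            (Finset.sum_congr rfl hRHS).symm

lemma negMulLog_add_le {x y : ℝ} (hx : 0 ≤ x) (hy : 0 ≤ y) :
    Real.negMulLog (x + y) ≤ Real.negMulLog x + Real.negMulLog y := by
  have h1 : ∀ a b : ℝ, 0 ≤ a → 0 ≤ b → -(a * Real.log (a + b)) ≤ Real.negMulLog a := by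
    intro a b ha hb
    rcases ha.eq_or_lt with h | h
    · simp [← h, Real.negMulLog]
    · rw [Real.negMulLog, neg_mul]
      exact neg_le_neg (mul_le_mul_of_nonneg_left
        (Real.log_le_log h (by linarith)) ha)
  calc Real.negMulLog (x + y) = -(x * Real.log (x + y)) + -(y * Real.log (y + x)) := by
        rw [Real.negMulLog, add_comm y x]; ring
    _ ≤ Real.negMulLog x + Real.negMulLog y :=
        add_le_add (h1 x y hx hy) (h1 y x hy hx)

lemma negMulLog_add_lt {x y : ℝ} (hx : 0 < x) (hy : 0 < y) :
    Real.negMulLog (x + y) < Real.negMulLog x + Real.negMulLog y := by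
  have h1 : -(x * Real.log (x + y)) < Real.negMulLog x := by
    rw [Real.negMulLog, neg_mul]
    exact neg_lt_neg (mul_lt_mul_of_pos_left (Real.log_lt_log hx (by linarith)) hx)
  have h2 : -(y * Real.log (y + x)) ≤ Real.negMulLog y := by
    rw [Real.negMulLog, neg_mul]
    exact neg_le_neg (mul_le_mul_of_nonneg_left
      (Real.log_le_log hy (by linarith)) hy.le)
  calc Real.negMulLog (x + y) = -(x * Real.log (x + y)) + -(y * Real.log (y + x)) := by
        rw [Real.negMulLog, add_comm y x]; ring
    _ < Real.negMulLog x + Real.negMulLog y := add_lt_add_of_lt_of_le h1 h2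

lemma negMulLog_sum_le {β : Type*} {s : Finset β} {f : β → ℝ} (hf : ∀ i ∈ s, 0 ≤ f i) :
    Real.negMulLog (∑ i ∈ s, f i) ≤ ∑ i ∈ s, Real.negMulLog (f i) := by
  classical
  induction s using Finset.induction_on with
  | empty => simp [Real.negMulLog_zero]
  | @insert a s ha ih =>
      rw [Finset.sum_insert ha, Finset.sum_insert ha]
      calc Real.negMulLog (f a + ∑ i ∈ s, f i)
          ≤ Real.negMulLog (f a) + Real.negMulLog (∑ i ∈ s, f i) :=
            negMulLog_add_le (hf a (Finset.mem_insert_self a s))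
              (Finset.sum_nonneg fun i hi => hf i (Finset.mem_insert_of_mem hi))
        _ ≤ _ := add_le_add_right (ih fun i hi => hf i (Finset.mem_insert_of_mem hi)) _

lemma negMulLog_sum_lt {β : Type*} {s : Finset β} {f : β → ℝ} (hf : ∀ i ∈ s, 0 ≤ f i)
    {i j : β} (hi : i ∈ s) (hj : j ∈ s) (hij : i ≠ j) (hfi : 0 < f i) (hfj : 0 < f j) :
    Real.negMulLog (∑ k ∈ s, f k) < ∑ k ∈ s, Real.negMulLog (f k) := by
  classical
  have hjmem : j ∈ s.erase i := Finset.mem_erase.2 ⟨hij.symm, hj⟩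
  have hpos : 0 < ∑ k ∈ s.erase i, f k :=
    Finset.sum_pos' (fun k hk => hf k (Finset.mem_of_mem_erase hk)) ⟨j, hjmem, hfj⟩
  calc Real.negMulLog (∑ k ∈ s, f k)
      = Real.negMulLog (f i + ∑ k ∈ s.erase i, f k) := by rw [Finset.add_sum_erase s f hi]
    _ < Real.negMulLog (f i) + Real.negMulLog (∑ k ∈ s.erase i, f k) :=
        negMulLog_add_lt hfi hpos
    _ ≤ Real.negMulLog (f i) + ∑ k ∈ s.erase i, Real.negMulLog (f k) :=
        add_le_add_right (negMulLog_sum_le fun k hk => hf k (Finset.mem_of_mem_erase hk)) _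
    _ = ∑ k ∈ s, Real.negMulLog (f k) := Finset.add_sum_erase s (fun k => Real.negMulLog (f k)) hi

lemma negMulLog_sum_eq {β : Type*} {s : Finset β} {f : β → ℝ}
    (h : ∀ i ∈ s, ∀ j ∈ s, f i ≠ 0 → f j ≠ 0 → i = j) :
    Real.negMulLog (∑ i ∈ s, f i) = ∑ i ∈ s, Real.negMulLog (f i) := by
  classical
  by_cases hex : ∃ i ∈ s, f i ≠ 0
  · obtain ⟨i, hi, hfi⟩ := hex
    have h0 : ∀ b ∈ s, b ≠ i → f b = 0 := fun b hb hbi =>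
      by_contra fun hfb => hbi (h b hb i hi hfb hfi)
    rw [Finset.sum_eq_single_of_mem i hi h0,
      Finset.sum_eq_single_of_mem i hi
        (fun b hb hbi => by rw [h0 b hb hbi, Real.negMulLog_zero])]
  · push_neg at hex
    rw [Finset.sum_eq_zero hex, Real.negMulLog_zero]
    exact (Finset.sum_eq_zero fun i hi => by rw [hex i hi, Real.negMulLog_zero]).symm

lemma reals_singleton (a : A) : reals θ [a] = θ a := by
  ext w
  simp [reals]

lemma realsIter_single_succ (n : ℕ) (a : A) :
    realsIter θ (n + 1) [a] = (θ a).biUnion (realsIter θ n) := by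
  rw [realsIter_succ, reals_singleton]

lemma wordProb_single {a : A} {v : List A} (hv : v ∈ θ a) : wordProb θ P [a] v = P a v := by
  rw [wordProb_cons]
  rw [Finset.sum_eq_single_of_mem v hv (fun b hb hbv => ?_)]
  · rw [if_pos List.prefix_rfl, List.drop_length]
    show P a v * (if ([] : List A) = [] then (1:ℝ) else 0) = P a v
    rw [if_pos rfl, mul_one]
  · have : ¬ (b <+: v ∧ (v.drop b.length = [])) := by
      rintro ⟨⟨r, rfl⟩, hd⟩
      rw [List.drop_left] at hd
      subst hd
      exact hbv (by simp)
    rcases Classical.em (b <+: v) with hp | hp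
    · rw [if_pos hp]
      show P a b * (if v.drop b.length = [] then (1:ℝ) else 0) = 0
      rw [if_neg (fun hd => this ⟨hp, hd⟩), mul_zero]
    · rw [if_neg hp, mul_zero]

lemma iterProb_single_succ (n : ℕ) (a : A) (w : List A) :
    iterProb θ P (n+1) [a] w = ∑ v ∈ θ a, P a v * iterProb θ P n v w := by
  rw [iterProb_succ, reals_singleton]
  exact Finset.sum_congr rfl fun v hv => by rw [wordProb_single hv]

noncomputable def Hw (θ : A → Finset (List A)) (P : A → List A → ℝ) (n : ℕ) (u : List A) : ℝ :=
  ∑ w ∈ realsIter θ n u, Real.negMulLog (iterProb θ P n u w)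

lemma Hw_def (n : ℕ) (u : List A) :
    Hw θ P n u = ∑ w ∈ realsIter θ n u, Real.negMulLog (iterProb θ P n u w) := rfl

include hPpos hP0 hPsum in
lemma iterProb_cons (n : ℕ) (a : A) (u w : List A) :
    iterProb θ P n (a :: u) w = ∑ z ∈ realsIter θ n [a],
      iterProb θ P n [a] z * if z <+: w then iterProb θ P n u (w.drop z.length) else 0 := by
  rw [← List.singleton_append, iterProb_append hPpos hP0 hPsum]

lemma mem_realsIter_cons {n : ℕ} {a : A} {u z w : List A}
    (hz : z ∈ realsIter θ n [a]) (hw : w ∈ realsIter θ n u) :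
    z ++ w ∈ realsIter θ n (a :: u) := by
  rw [← List.singleton_append]
  exact mem_realsIter_append hz hw

include hPpos hP0 hPsum in
lemma Hw_split_sum (n : ℕ) (a : A) (u : List A) :
    ∑ w ∈ realsIter θ n (a :: u), ∑ z ∈ realsIter θ n [a],
      Real.negMulLog (iterProb θ P n [a] z *
        if z <+: w then iterProb θ P n u (w.drop z.length) else 0)
    = Hw θ P n [a] + Hw θ P n u := by
  rw [Finset.sum_comm]
  have inner : ∀ z ∈ realsIter θ n [a],
      ∑ w ∈ realsIter θ n (a :: u),
        Real.negMulLog (iterProb θ P n [a] z *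
          if z <+: w then iterProb θ P n u (w.drop z.length) else 0)
      = Real.negMulLog (iterProb θ P n [a] z) + iterProb θ P n [a] z * Hw θ P n u := by
    intro z hz
    have hext : ∑ w ∈ realsIter θ n (a :: u),
        Real.negMulLog (iterProb θ P n [a] z *
          if z <+: w then iterProb θ P n u (w.drop z.length) else 0)
        = ∑ w ∈ (realsIter θ n u).image (fun w2 => z ++ w2),
        Real.negMulLog (iterProb θ P n [a] z *
          if z <+: w then iterProb θ P n u (w.drop z.length) else 0) := by
      symm
      apply Finset.sum_subset (fun w hw => ?_) (fun w hw hnotin => ?_)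
      · rw [Finset.mem_image] at hw
        obtain ⟨w2, hw2, rfl⟩ := hw
        exact mem_realsIter_cons hz hw2
      · rcases Classical.em (z <+: w) with hp | hp
        · rw [if_pos hp]
          have : w.drop z.length ∉ realsIter θ n u := by
            intro hmem
            exact hnotin (Finset.mem_image.2 ⟨_, hmem, by
              obtain ⟨r, rfl⟩ := hp; rw [List.drop_left]⟩)
          rw [iterProb_eq_zero _ _ _ this, mul_zero, Real.negMulLog_zero]
        · rw [if_neg hp, mul_zero, Real.negMulLog_zero]
    rw [hext, Finset.sum_image (by intro x _ y _ h; exact List.append_cancel_left h)]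
    have : ∀ w2 ∈ realsIter θ n u,
        Real.negMulLog (iterProb θ P n [a] z *
          if z <+: z ++ w2 then iterProb θ P n u ((z ++ w2).drop z.length) else 0)
        = iterProb θ P n u w2 * Real.negMulLog (iterProb θ P n [a] z)
          + iterProb θ P n [a] z * Real.negMulLog (iterProb θ P n u w2) := by
      intro w2 _
      rw [if_pos (List.prefix_append z w2), List.drop_left, Real.negMulLog_mul]
    rw [Finset.sum_congr rfl this, Finset.sum_add_distrib, ← Finset.sum_mul,
      sum_iterProb hPpos hP0 hPsum, one_mul, ← Finset.mul_sum]
    rfl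
  rw [Finset.sum_congr rfl inner, Finset.sum_add_distrib, ← Finset.sum_mul,
    sum_iterProb hPpos hP0 hPsum, one_mul]
  rfl

include hPpos hP0 hPsum in
lemma Hw_cons_le (n : ℕ) (a : A) (u : List A) :
    Hw θ P n (a :: u) ≤ Hw θ P n [a] + Hw θ P n u := by
  rw [← Hw_split_sum hPpos hP0 hPsum n a u]
  apply Finset.sum_le_sum
  intro w hw
  rw [show iterProb θ P n (a :: u) w = ∑ z ∈ realsIter θ n [a],
      iterProb θ P n [a] z * if z <+: w then iterProb θ P n u (w.drop z.length) else 0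
    from iterProb_cons hPpos hP0 hPsum n a u w]
  apply negMulLog_sum_le
  intro z hz
  apply mul_nonneg (iterProb_nonneg hPpos hP0 _ _ _)
  split
  · exact iterProb_nonneg hPpos hP0 _ _ _
  · rfl

include hPpos hP0 hPsum in
lemma Hw_cons_eq (n : ℕ) (a : A) (u : List A)
    (huniq : ∀ w ∈ realsIter θ n (a :: u), ∀ z ∈ realsIter θ n [a],
      ∀ z' ∈ realsIter θ n [a],
      (iterProb θ P n [a] z * if z <+: w then iterProb θ P n u (w.drop z.length) else 0) ≠ 0 →
      (iterProb θ P n [a] z' * if z' <+: w then iterProb θ P n u (w.drop z'.length) else 0) ≠ 0 →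
      z = z') :
    Hw θ P n (a :: u) = Hw θ P n [a] + Hw θ P n u := by
  rw [← Hw_split_sum hPpos hP0 hPsum n a u]
  apply Finset.sum_congr rfl
  intro w hw
  rw [show iterProb θ P n (a :: u) w = ∑ z ∈ realsIter θ n [a],
      iterProb θ P n [a] z * if z <+: w then iterProb θ P n u (w.drop z.length) else 0
    from iterProb_cons hPpos hP0 hPsum n a u w]
  exact negMulLog_sum_eq (huniq w hw)

include hPpos hP0 hPsum in
lemma realsIter_cons_decomp {n : ℕ} {a : A} {u w : List A}
    (hw : w ∈ realsIter θ n (a :: u)) :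
    ∃ z ∈ realsIter θ n [a], ∃ w2 ∈ realsIter θ n u, w = z ++ w2 := by
  have hpos : iterProb θ P n (a :: u) w ≠ 0 := (iterProb_pos hPpos hP0 hw).ne'
  rw [iterProb_cons hPpos hP0 hPsum] at hpos
  obtain ⟨z, hz, hne⟩ := Finset.exists_ne_zero_of_sum_ne_zero hpos
  have hp : z <+: w := by
    by_contra hp
    rw [if_neg hp, mul_zero] at hne
    exact hne rfl
  rw [if_pos hp] at hne
  have h2 : iterProb θ P n u (w.drop z.length) ≠ 0 := fun h0 => hne (by rw [h0, mul_zero])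
  refine ⟨z, hz, w.drop z.length, iterProb_support hPpos hP0 h2, ?_⟩
  obtain ⟨r, rfl⟩ := hp
  rw [List.drop_left]

include hPpos hP0 hPsum in
lemma exists_decomp {n : ℕ} {u w : List A} (hw : w ∈ realsIter θ n u) :
    ∃ f : Fin u.length → List A,
      (∀ i, f i ∈ realsIter θ n [u.get i]) ∧ (List.ofFn f).flatten = w := by
  induction u generalizing w with
  | nil =>
      rw [realsIter_nil, Finset.mem_singleton] at hw
      exact ⟨fun i => i.elim0, fun i => i.elim0, by rw [hw]; rfl⟩
  | cons a u ih =>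
      obtain ⟨z, hz, w2, hw2, rfl⟩ := realsIter_cons_decomp hPpos hP0 hPsum hw
      obtain ⟨g, hg, hflat⟩ := ih hw2
      refine ⟨Fin.cons z g, fun i => ?_, ?_⟩
      · refine Fin.cases ?_ (fun j => ?_) i
        · rw [Fin.cons_zero]
          exact hz
        · rw [Fin.cons_succ]
          exact hg j
      · simp only [List.ofFn_succ, Fin.cons_zero, Fin.cons_succ, List.flatten_cons, hflat]


end Aux

section Aux2

variable {θ : A → Finset (List A)} {P : A → List A → ℝ}

set_option linter.unusedSectionVars false

lemma Legal.tail {a : A} {u : List A} (h : Legal θ (a :: u)) : Legal θ u := by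
  obtain ⟨b, k, w, hw, hinf⟩ := h
  exact ⟨b, k, w, hw, ((List.suffix_cons a u).isInfix).trans hinf⟩

lemma legal_of_mem_theta {a : A} {v : List A} (hv : v ∈ θ a) : Legal θ v := by
  refine ⟨a, 1, v, ?_, List.infix_rfl⟩
  rw [realsIter_succ, reals_singleton]
  exact Finset.mem_biUnion.2 ⟨v, hv, by rw [show realsIter θ 0 v = {v} from rfl]; simp⟩

variable (hPpos : ∀ a, ∀ w ∈ θ a, 0 < P a w) (hP0 : ∀ a w, w ∉ θ a → P a w = 0)
  (hPsum : ∀ a, ∑ w ∈ θ a, P a w = 1)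

include hPpos hP0 hPsum in
lemma uniq_of_URP (hURP : UniqueRealisationPaths θ) {n : ℕ} {a : A} {u : List A}
    (hleg : Legal θ (a :: u)) :
    ∀ w ∈ realsIter θ n (a :: u), ∀ z ∈ realsIter θ n [a], ∀ z' ∈ realsIter θ n [a],
      (iterProb θ P n [a] z * if z <+: w then iterProb θ P n u (w.drop z.length) else 0) ≠ 0 →
      (iterProb θ P n [a] z' * if z' <+: w then iterProb θ P n u (w.drop z'.length) else 0) ≠ 0 →
      z = z' := by
  intro w _ z hz z' hz' h1 h2
  have split : ∀ z0, z0 ∈ realsIter θ n [a] →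
      (iterProb θ P n [a] z0 *
        if z0 <+: w then iterProb θ P n u (w.drop z0.length) else 0) ≠ 0 →
      z0 <+: w ∧ w.drop z0.length ∈ realsIter θ n u := by
    intro z0 _ hne
    have hp : z0 <+: w := by
      by_contra hp
      rw [if_neg hp, mul_zero] at hne
      exact hne rfl
    rw [if_pos hp] at hne
    have : iterProb θ P n u (w.drop z0.length) ≠ 0 :=
      fun h0 => hne (by rw [h0, mul_zero])
    exact ⟨hp, iterProb_support hPpos hP0 this⟩
  obtain ⟨hp, hd⟩ := split z hz h1
  obtain ⟨hp', hd'⟩ := split z' hz' h2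
  obtain ⟨g, hg, hflat⟩ := exists_decomp hPpos hP0 hPsum hd
  obtain ⟨g', hg', hflat'⟩ := exists_decomp hPpos hP0 hPsum hd'
  have hmem : ∀ i : Fin (a :: u).length,
      Fin.cons (α := fun _ => List A) z g i ∈ realsIter θ n [(a :: u).get i] := by
    intro i
    refine Fin.cases ?_ (fun j => ?_) i
    · rw [Fin.cons_zero]; exact hz
    · rw [Fin.cons_succ]; exact hg j
  have hmem' : ∀ i : Fin (a :: u).length,
      Fin.cons (α := fun _ => List A) z' g' i ∈ realsIter θ n [(a :: u).get i] := by
    intro i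
    refine Fin.cases ?_ (fun j => ?_) i
    · rw [Fin.cons_zero]; exact hz'
    · rw [Fin.cons_succ]; exact hg' j
  have hflatten : (List.ofFn (Fin.cons (α := fun _ => List A) z g)).flatten
      = (List.ofFn (Fin.cons (α := fun _ => List A) z' g')).flatten := by
    have e1 : (List.ofFn (Fin.cons (α := fun _ => List A) z g)).flatten = w := by
      simp only [List.ofFn_succ, Fin.cons_zero, Fin.cons_succ, List.flatten_cons, hflat]
      obtain ⟨r, rfl⟩ := hp
      rw [List.drop_left]
    have e2 : (List.ofFn (Fin.cons (α := fun _ => List A) z' g')).flatten = w := by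
      simp only [List.ofFn_succ, Fin.cons_zero, Fin.cons_succ, List.flatten_cons, hflat']
      obtain ⟨r, rfl⟩ := hp'
      rw [List.drop_left]
    rw [e1, e2]
  have := hURP (a :: u) hleg n _ _ hmem hmem' hflatten
  have h0 := congrFun this 0
  simpa using h0

lemma Hvec_eq_Hw (k : ℕ) (a : A) : Hvec θ P k a = Hw θ P k [a] := rfl

lemma Hvec_zero (a : A) : Hvec θ P 0 a = 0 := by
  show ∑ w ∈ realsIter θ 0 [a], Real.negMulLog (iterProb θ P 0 [a] w) = 0
  rw [show realsIter θ 0 [a] = {[a]} from rfl, Finset.sum_singleton, iterProb_zero,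
    if_pos rfl, Real.negMulLog_one]

lemma realsIter_one (a : A) : realsIter θ 1 [a] = θ a := by
  rw [realsIter_single_succ]
  ext w
  simp [show ∀ v : List A, realsIter θ 0 v = {v} from fun _ => rfl]

lemma iterProb_one {a : A} {w : List A} (hw : w ∈ θ a) : iterProb θ P 1 [a] w = P a w := by
  rw [iterProb_single_succ]
  rw [Finset.sum_eq_single_of_mem w hw
    (fun b hb hbw => by rw [iterProb_zero, if_neg hbw, mul_zero])]
  rw [iterProb_zero, if_pos rfl, mul_one]

lemma Hvec_one (a : A) : Hvec θ P 1 a = ∑ w ∈ θ a, Real.negMulLog (P a w) := by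
  rw [Hvec_eq_Hw, Hw_def, realsIter_one]
  exact Finset.sum_congr rfl fun w hw => by rw [iterProb_one hw]

include hPpos hP0 hPsum in
lemma Hw_nil (n : ℕ) : Hw θ P n ([] : List A) = 0 := by
  rw [Hw_def, realsIter_nil, Finset.sum_singleton]
  have h := sum_iterProb hPpos hP0 hPsum n ([] : List A)
  rw [realsIter_nil, Finset.sum_singleton] at h
  rw [h, Real.negMulLog_one]

lemma count_sum_eq (a : A) (u : List A) (H : A → ℝ) :
    ∑ b, (((a :: u).count b : ℕ) : ℝ) * H b = H a + ∑ b, ((u.count b : ℕ) : ℝ) * H b := by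
  have hc : ∀ b : A, (((a :: u).count b : ℕ) : ℝ)
      = ((u.count b : ℕ) : ℝ) + if b = a then 1 else 0 := by
    intro b
    rw [List.count_cons]
    push_cast [beq_iff_eq]
    simp [eq_comm]
  rw [Finset.sum_congr rfl (fun b _ => by rw [hc b, add_mul, ite_mul, one_mul, zero_mul]),
    Finset.sum_add_distrib, Finset.sum_ite_eq' Finset.univ a H, if_pos (Finset.mem_univ a),
    add_comm]

include hPpos hP0 hPsum in
lemma Hw_le_count (n : ℕ) (u : List A) :
    Hw θ P n u ≤ ∑ b, ((u.count b : ℕ) : ℝ) * Hvec θ P n b := by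
  induction u with
  | nil =>
      rw [Hw_nil hPpos hP0 hPsum]
      simp
  | cons a u ih =>
      calc Hw θ P n (a :: u) ≤ Hw θ P n [a] + Hw θ P n u :=
            Hw_cons_le hPpos hP0 hPsum n a u
        _ ≤ Hvec θ P n a + ∑ b, ((u.count b : ℕ) : ℝ) * Hvec θ P n b := by
            rw [Hvec_eq_Hw]
            exact add_le_add_right ih _
        _ = ∑ b, (((a :: u).count b : ℕ) : ℝ) * Hvec θ P n b := (count_sum_eq a u _).symm

include hPpos hP0 hPsum in
lemma Hw_eq_count (hURP : UniqueRealisationPaths θ) (n : ℕ) {u : List A} (hleg : Legal θ u) :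
    Hw θ P n u = ∑ b, ((u.count b : ℕ) : ℝ) * Hvec θ P n b := by
  induction u with
  | nil =>
      rw [Hw_nil hPpos hP0 hPsum]
      simp
  | cons a u ih =>
      calc Hw θ P n (a :: u) = Hw θ P n [a] + Hw θ P n u :=
            Hw_cons_eq hPpos hP0 hPsum n a u
              (uniq_of_URP hPpos hP0 hPsum hURP hleg)
        _ = Hvec θ P n a + ∑ b, ((u.count b : ℕ) : ℝ) * Hvec θ P n b := by
            rw [Hvec_eq_Hw, ih hleg.tail]
        _ = ∑ b, (((a :: u).count b : ℕ) : ℝ) * Hvec θ P n b := (count_sum_eq a u _).symm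

include hPpos hP0 in
lemma Hvec_succ_term_eq (n : ℕ) (a : A) (hPsum : ∀ a, ∑ w ∈ θ a, P a w = 1) :
    ∀ v ∈ θ a, ∑ w ∈ realsIter θ (n+1) [a], Real.negMulLog (P a v * iterProb θ P n v w)
      = Real.negMulLog (P a v) + P a v * Hw θ P n v := by
  intro v hv
  have hsub : realsIter θ n v ⊆ realsIter θ (n+1) [a] := by
    rw [realsIter_single_succ]
    exact Finset.subset_biUnion_of_mem _ hv
  rw [← Finset.sum_subset hsub (fun w _ hw => by
    simp [iterProb_eq_zero n v w hw, Real.negMulLog_zero])]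
  rw [Finset.sum_congr rfl (fun w _ => Real.negMulLog_mul (P a v) (iterProb θ P n v w)),
    Finset.sum_add_distrib, ← Finset.sum_mul, sum_iterProb hPpos hP0 hPsum, one_mul,
    ← Finset.mul_sum, Hw_def]

lemma Hvec_succ_def (n : ℕ) (a : A) : Hvec θ P (n+1) a
    = ∑ w ∈ realsIter θ (n+1) [a], Real.negMulLog (iterProb θ P (n+1) [a] w) := rfl

include hPpos hP0 hPsum in
lemma Hvec_succ_le (n : ℕ) (a : A) :
    Hvec θ P (n+1) a ≤ Hvec θ P 1 a + ∑ v ∈ θ a, P a v * Hw θ P n v := by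
  calc Hvec θ P (n+1) a
      ≤ ∑ w ∈ realsIter θ (n+1) [a], ∑ v ∈ θ a,
          Real.negMulLog (P a v * iterProb θ P n v w) := by
        rw [Hvec_succ_def]
        apply Finset.sum_le_sum
        intro w _
        rw [iterProb_single_succ]
        exact negMulLog_sum_le fun v hv =>
          mul_nonneg (P_nonneg hPpos hP0 a v) (iterProb_nonneg hPpos hP0 _ _ _)
    _ = ∑ v ∈ θ a, ∑ w ∈ realsIter θ (n+1) [a],
          Real.negMulLog (P a v * iterProb θ P n v w) := Finset.sum_comm
    _ = ∑ v ∈ θ a, (Real.negMulLog (P a v) + P a v * Hw θ P n v) :=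
        Finset.sum_congr rfl (Hvec_succ_term_eq hPpos hP0 n a hPsum)
    _ = Hvec θ P 1 a + ∑ v ∈ θ a, P a v * Hw θ P n v := by
        rw [Finset.sum_add_distrib, Hvec_one]

include hPpos hP0 hPsum in
lemma Hvec_succ_eq (hDSC : DisjointSetCondition θ) (n : ℕ) (a : A) :
    Hvec θ P (n+1) a = Hvec θ P 1 a + ∑ v ∈ θ a, P a v * Hw θ P n v := by
  calc Hvec θ P (n+1) a
      = ∑ w ∈ realsIter θ (n+1) [a], ∑ v ∈ θ a,
          Real.negMulLog (P a v * iterProb θ P n v w) := by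
        rw [Hvec_succ_def]
        apply Finset.sum_congr rfl
        intro w _
        rw [iterProb_single_succ]
        apply negMulLog_sum_eq
        intro v1 hv1 v2 hv2 h1 h2
        by_contra hne
        have m1 : w ∈ realsIter θ n v1 := iterProb_support hPpos hP0
          (fun h0 => h1 (by rw [h0, mul_zero]))
        have m2 : w ∈ realsIter θ n v2 := iterProb_support hPpos hP0
          (fun h0 => h2 (by rw [h0, mul_zero]))
        exact hDSC a n v1 hv1 v2 hv2 hne w m1 m2
    _ = ∑ v ∈ θ a, ∑ w ∈ realsIter θ (n+1) [a],
          Real.negMulLog (P a v * iterProb θ P n v w) := Finset.sum_comm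
    _ = ∑ v ∈ θ a, (Real.negMulLog (P a v) + P a v * Hw θ P n v) :=
        Finset.sum_congr rfl (Hvec_succ_term_eq hPpos hP0 n a hPsum)
    _ = Hvec θ P 1 a + ∑ v ∈ θ a, P a v * Hw θ P n v := by
        rw [Finset.sum_add_distrib, Hvec_one]

include hPpos hP0 hPsum in
lemma Hvec_succ_lt {a : A} {k : ℕ} {u v : List A} (hu : u ∈ θ a) (hv : v ∈ θ a)
    (huv : u ≠ v) {w₀ : List A} (hwu : w₀ ∈ realsIter θ k u) (hwv : w₀ ∈ realsIter θ k v) :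
    Hvec θ P (k+1) a < Hvec θ P 1 a + ∑ v ∈ θ a, P a v * Hw θ P k v := by
  have key : Hvec θ P (k+1) a < ∑ w ∈ realsIter θ (k+1) [a], ∑ v ∈ θ a,
      Real.negMulLog (P a v * iterProb θ P k v w) := by
    rw [Hvec_succ_def]
    apply Finset.sum_lt_sum
    · intro w _
      rw [iterProb_single_succ]
      exact negMulLog_sum_le fun v hv =>
        mul_nonneg (P_nonneg hPpos hP0 a v) (iterProb_nonneg hPpos hP0 _ _ _)
    · refine ⟨w₀, ?_, ?_⟩
      · rw [realsIter_single_succ]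
        exact Finset.mem_biUnion.2 ⟨u, hu, hwu⟩
      · rw [iterProb_single_succ]
        exact negMulLog_sum_lt
          (fun v hv => mul_nonneg (P_nonneg hPpos hP0 a v) (iterProb_nonneg hPpos hP0 _ _ _))
          hu hv huv
          (mul_pos (hPpos a u hu) (iterProb_pos hPpos hP0 hwu))
          (mul_pos (hPpos a v hv) (iterProb_pos hPpos hP0 hwv))
  calc Hvec θ P (k+1) a
      < ∑ w ∈ realsIter θ (k+1) [a], ∑ v ∈ θ a,
          Real.negMulLog (P a v * iterProb θ P k v w) := key
    _ = ∑ v ∈ θ a, ∑ w ∈ realsIter θ (k+1) [a],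
          Real.negMulLog (P a v * iterProb θ P k v w) := Finset.sum_comm
    _ = ∑ v ∈ θ a, (Real.negMulLog (P a v) + P a v * Hw θ P k v) :=
        Finset.sum_congr rfl (Hvec_succ_term_eq hPpos hP0 k a hPsum)
    _ = Hvec θ P 1 a + ∑ v ∈ θ a, P a v * Hw θ P k v := by
        rw [Finset.sum_add_distrib, Hvec_one]

lemma substM_apply (b a : A) :
    substM θ P b a = ∑ w ∈ θ a, P a w * ((w.count b : ℕ) : ℝ) := rfl

lemma sum_count_identity (n : ℕ) (a : A) :
    ∑ v ∈ θ a, P a v * ∑ b, ((v.count b : ℕ) : ℝ) * Hvec θ P n b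
      = ∑ b, substM θ P b a * Hvec θ P n b := by
  calc ∑ v ∈ θ a, P a v * ∑ b, ((v.count b : ℕ) : ℝ) * Hvec θ P n b
      = ∑ v ∈ θ a, ∑ b, P a v * (((v.count b : ℕ) : ℝ) * Hvec θ P n b) :=
        Finset.sum_congr rfl fun v _ => Finset.mul_sum _ _ _
    _ = ∑ b, ∑ v ∈ θ a, P a v * (((v.count b : ℕ) : ℝ) * Hvec θ P n b) := Finset.sum_comm
    _ = ∑ b, substM θ P b a * Hvec θ P n b := by
        apply Finset.sum_congr rfl
        intro b _
        rw [substM_apply, Finset.sum_mul]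
        apply Finset.sum_congr rfl
        intro v _
        ring

include hPpos hP0 hPsum in
lemma sum_PHw_le (n : ℕ) (a : A) :
    ∑ v ∈ θ a, P a v * Hw θ P n v ≤ ∑ b, substM θ P b a * Hvec θ P n b := by
  calc ∑ v ∈ θ a, P a v * Hw θ P n v
      ≤ ∑ v ∈ θ a, P a v * ∑ b, ((v.count b : ℕ) : ℝ) * Hvec θ P n b :=
        Finset.sum_le_sum fun v hv =>
          mul_le_mul_of_nonneg_left (Hw_le_count hPpos hP0 hPsum n v) (hPpos a v hv).le
    _ = ∑ b, substM θ P b a * Hvec θ P n b := sum_count_identity n a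

include hPpos hP0 hPsum in
lemma sum_PHw_eq (hURP : UniqueRealisationPaths θ) (n : ℕ) (a : A) :
    ∑ v ∈ θ a, P a v * Hw θ P n v = ∑ b, substM θ P b a * Hvec θ P n b := by
  calc ∑ v ∈ θ a, P a v * Hw θ P n v
      = ∑ v ∈ θ a, P a v * ∑ b, ((v.count b : ℕ) : ℝ) * Hvec θ P n b :=
        Finset.sum_congr rfl fun v hv => by
          rw [Hw_eq_count hPpos hP0 hPsum hURP n (legal_of_mem_theta hv)]
    _ = ∑ b, substM θ P b a * Hvec θ P n b := sum_count_identity n a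

variable {lam : ℝ} {R : A → ℝ}

lemma mulVec_component (hEig : (substM θ P).mulVec R = lam • R) (b : A) :
    ∑ a, substM θ P b a * R a = lam * R b := by
  have h := congrFun hEig b
  simpa [Matrix.mulVec, dotProduct] using h

lemma HdotR_def' (k : ℕ) : HdotR θ P R k = ∑ a, Hvec θ P k a * R a := rfl

lemma HdotR_zero : HdotR θ P R 0 = 0 := by
  rw [HdotR_def']
  simp [Hvec_zero]

lemma HdotR_algebra (hEig : (substM θ P).mulVec R = lam • R) (n : ℕ) :
    ∑ a, (Hvec θ P 1 a + ∑ b, substM θ P b a * Hvec θ P n b) * R a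
      = HdotR θ P R 1 + lam * HdotR θ P R n := by
  rw [Finset.sum_congr rfl (fun a (_ : a ∈ Finset.univ) =>
    add_mul (Hvec θ P 1 a) (∑ b, substM θ P b a * Hvec θ P n b) (R a)),
    Finset.sum_add_distrib]
  congr 1
  calc ∑ a, (∑ b, substM θ P b a * Hvec θ P n b) * R a
      = ∑ a, ∑ b, substM θ P b a * Hvec θ P n b * R a :=
        Finset.sum_congr rfl fun a _ => Finset.sum_mul _ _ _
    _ = ∑ b, ∑ a, substM θ P b a * Hvec θ P n b * R a := Finset.sum_comm
    _ = ∑ b, Hvec θ P n b * ∑ a, substM θ P b a * R a := by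
        apply Finset.sum_congr rfl
        intro b _
        rw [Finset.mul_sum]
        apply Finset.sum_congr rfl
        intro a _
        ring
    _ = ∑ b, Hvec θ P n b * (lam * R b) :=
        Finset.sum_congr rfl fun b _ => by rw [mulVec_component hEig b]
    _ = lam * HdotR θ P R n := by
        rw [HdotR_def', Finset.mul_sum]
        apply Finset.sum_congr rfl
        intro b _
        ring

include hPpos hP0 hPsum in
lemma HdotR_succ_le (hEig : (substM θ P).mulVec R = lam • R) (hRpos : ∀ a, 0 < R a) (n : ℕ) :
    HdotR θ P R (n+1) ≤ HdotR θ P R 1 + lam * HdotR θ P R n := by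
  rw [← HdotR_algebra hEig n, HdotR_def']
  apply Finset.sum_le_sum
  intro a _
  apply mul_le_mul_of_nonneg_right _ (hRpos a).le
  exact (Hvec_succ_le hPpos hP0 hPsum n a).trans
    (add_le_add_right (sum_PHw_le hPpos hP0 hPsum n a) _)

include hPpos hP0 hPsum in
lemma HdotR_succ_eq (hEig : (substM θ P).mulVec R = lam • R)
    (hURP : UniqueRealisationPaths θ) (hDSC : DisjointSetCondition θ) (n : ℕ) :
    HdotR θ P R (n+1) = HdotR θ P R 1 + lam * HdotR θ P R n := by
  rw [← HdotR_algebra hEig n, HdotR_def']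
  apply Finset.sum_congr rfl
  intro a _
  rw [Hvec_succ_eq hPpos hP0 hPsum hDSC n a, sum_PHw_eq hPpos hP0 hPsum hURP n a]

include hPpos hP0 hPsum in
lemma HdotR_succ_lt (hEig : (substM θ P).mulVec R = lam • R) (hRpos : ∀ a, 0 < R a)
    {a : A} {k : ℕ} {u v : List A} (hu : u ∈ θ a) (hv : v ∈ θ a) (huv : u ≠ v)
    {w₀ : List A} (hwu : w₀ ∈ realsIter θ k u) (hwv : w₀ ∈ realsIter θ k v) :
    HdotR θ P R (k+1) < HdotR θ P R 1 + lam * HdotR θ P R k := by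
  rw [← HdotR_algebra hEig k, HdotR_def']
  apply Finset.sum_lt_sum
  · intro a' _
    apply mul_le_mul_of_nonneg_right _ (hRpos a').le
    exact (Hvec_succ_le hPpos hP0 hPsum k a').trans
      (add_le_add_right (sum_PHw_le hPpos hP0 hPsum k a') _)
  · refine ⟨a, Finset.mem_univ a, ?_⟩
    apply mul_lt_mul_of_pos_right _ (hRpos a)
    exact lt_of_lt_of_le (Hvec_succ_lt hPpos hP0 hPsum hu hv huv hwu hwv)
      (add_le_add_right (sum_PHw_le hPpos hP0 hPsum k a) _)

include hPpos hP0 hPsum in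
lemma HdotR_le_geom (hEig : (substM θ P).mulVec R = lam • R) (hRpos : ∀ a, 0 < R a)
    (hlam : 1 < lam) (n : ℕ) :
    HdotR θ P R n ≤ HdotR θ P R 1 * ((lam ^ n - 1) / (lam - 1)) := by
  induction n with
  | zero => rw [HdotR_zero]; simp
  | succ n ih =>
      have h1 := HdotR_succ_le hPpos hP0 hPsum hEig hRpos n
      have h2 : lam * HdotR θ P R n ≤ lam * (HdotR θ P R 1 * ((lam ^ n - 1) / (lam - 1))) :=
        mul_le_mul_of_nonneg_left ih (by linarith)
      have hne : lam - 1 ≠ 0 := by intro h; linarith [sub_eq_zero.1 h]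
      have halg : HdotR θ P R 1 + lam * (HdotR θ P R 1 * ((lam ^ n - 1) / (lam - 1)))
          = HdotR θ P R 1 * ((lam ^ (n+1) - 1) / (lam - 1)) := by
        field_simp
        ring
      linarith

include hPpos hP0 hPsum in
lemma HdotR_eq_geom (hEig : (substM θ P).mulVec R = lam • R)
    (hURP : UniqueRealisationPaths θ) (hDSC : DisjointSetCondition θ)
    (hlam : 1 < lam) (n : ℕ) :
    HdotR θ P R n = HdotR θ P R 1 * ((lam ^ n - 1) / (lam - 1)) := by
  induction n with
  | zero => rw [HdotR_zero]; simp
  | succ n ih =>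
      have hne : lam - 1 ≠ 0 := by intro h; linarith [sub_eq_zero.1 h]
      rw [HdotR_succ_eq hPpos hP0 hPsum hEig hURP hDSC n, ih]
      field_simp
      ring


end Aux2

theorem statement10 {A : Type*} [Fintype A] [DecidableEq A]
    (θ : A → Finset (List A)) (P : A → List A → ℝ) (lam : ℝ) (R : A → ℝ)
    (hRS : IsRandomSubstitution θ P) (hprim : IsPrimitive θ P) (hlam : 1 < lam)
    (hRpos : ∀ a, 0 < R a) (hRsum : ∑ a, R a = 1)
    (hEig : (substM θ P).mulVec R = lam • R) :
    (∀ n : ℕ, 1 ≤ n → HdotR θ P R n / (lam ^ n - 1) ≤ HdotR θ P R 1 / (lam - 1)) ∧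
      (UniqueRealisationPaths θ →
        ((∀ n : ℕ, 1 ≤ n → HdotR θ P R n / (lam ^ n - 1) = HdotR θ P R 1 / (lam - 1)) ↔
          DisjointSetCondition θ)) := by

  obtain ⟨hne, hwne, hPpos, hP0, hPsum⟩ := hRS
  have hl1 : (0:ℝ) < lam - 1 := by linarith
  constructor
  · intro n hn
    have hpow : (0:ℝ) < lam ^ n - 1 := by
      have := one_lt_pow₀ hlam (by omega : n ≠ 0)
      linarith
    rw [div_le_div_iff₀ hpow hl1]
    have hb := HdotR_le_geom hPpos hP0 hPsum hEig hRpos hlam n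
    have h2 := mul_le_mul_of_nonneg_right hb hl1.le
    have h3 : HdotR θ P R 1 * ((lam ^ n - 1) / (lam - 1)) * (lam - 1)
        = HdotR θ P R 1 * (lam ^ n - 1) := by
      field_simp
    linarith
  · intro hURP
    constructor
    · intro heq a k u hu v hv huv w hwu hwv
      have hAll : ∀ m : ℕ, HdotR θ P R m = HdotR θ P R 1 * ((lam ^ m - 1) / (lam - 1)) := by
        intro m
        match m with
        | 0 => rw [HdotR_zero]; simp
        | m+1 =>
            have h := heq (m+1) (by omega)
            have hpow : (0:ℝ) < lam ^ (m+1) - 1 := by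
              have := one_lt_pow₀ hlam (by omega : m + 1 ≠ 0)
              linarith
            rw [div_eq_div_iff hpow.ne' hl1.ne'] at h
            field_simp
            linear_combination h
      have hlt := HdotR_succ_lt hPpos hP0 hPsum hEig hRpos hu hv huv hwu hwv
      rw [hAll (k+1), hAll k] at hlt
      have hid : HdotR θ P R 1 * ((lam ^ (k+1) - 1) / (lam - 1))
          = HdotR θ P R 1 + lam * (HdotR θ P R 1 * ((lam ^ k - 1) / (lam - 1))) := by
        field_simp
        ring
      linarith
    · intro hDSC n hn
      have hpow : (0:ℝ) < lam ^ n - 1 := by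
        have := one_lt_pow₀ hlam (by omega : n ≠ 0)
        linarith
      rw [HdotR_eq_geom hPpos hP0 hPsum hEig hURP hDSC hlam n,
        div_eq_div_iff hpow.ne' hl1.ne']
      field_simp


end RandomSubstitutionTheory
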